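/- Let z_1,...,z_n be independent random variables, each taking values in {−1, +1}, with p_j = Pr[z_j = 1], and let σ² = Σ_{j=1}^n p_j(1−p_j) (so that 4σ² is the variance of Σ_j z_j). Then for every integer t, Pr[Σ_{j=1}^n z_j = t] ≤ ∫_0^1 exp(−2σ²·sin²(πθ)) dθ. -/

import Mathlib

open Finset

/-- The probability that independent `±1`-valued coordinates with `Pr[z_j = 1] = p_j`
produce exactly the sign pattern whose set of `+1` coordinates is `s`. -/
def pmWeight {n : ℕ} (p : Fin n → ℝ) (s : Finset (Fin n)) : ℝ :=
  (∏ j ∈ s, p j) * ∏ j ∈ sᶜ, (1 - p j)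

open Complex

private lemma orth (m : ℤ) :
    (∫ θ in (0:ℝ)..1, Complex.exp (2 * Real.pi * Complex.I * m * θ))
      = if m = 0 then 1 else 0 := by
  rcases eq_or_ne m 0 with h | h
  · simp [h]
  · rw [if_neg h]
    have hc : (2 * (Real.pi:ℂ) * Complex.I * m) ≠ 0 := by
      simp only [ne_eq, mul_eq_zero, Complex.I_ne_zero, or_false, not_or]
      refine ⟨⟨by norm_num, by exact_mod_cast Real.pi_ne_zero⟩, by exact_mod_cast h⟩
    have h1 : Complex.exp (2 * (Real.pi:ℂ) * Complex.I * m) = 1 := by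
      rw [show (2 * (Real.pi:ℂ) * Complex.I * m) = (m:ℂ) * (2 * Real.pi * Complex.I) by ring]
      exact Complex.exp_int_mul_two_pi_mul_I m
    rw [integral_exp_mul_complex (a := 0) (b := 1) hc]
    simp [h1]

private lemma norm_phi (p θ : ℝ) (_h0 : 0 ≤ p) (_h1 : p ≤ 1) :
    ‖(p : ℂ) * Complex.exp (2 * Real.pi * Complex.I * θ) + (1 - p)‖
      ≤ Real.exp (-(2 * (p * (1 - p)) * Real.sin (Real.pi * θ) ^ 2)) := by
  set s := Real.sin (Real.pi * θ) with hs
  set c := Real.cos (Real.pi * θ) with hc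
  have hsc : s ^ 2 + c ^ 2 = 1 := Real.sin_sq_add_cos_sq _
  have harg : (2 * (Real.pi:ℂ) * Complex.I * θ) = ((2 * (Real.pi * θ) : ℝ) : ℂ) * Complex.I := by
    push_cast; ring
  have hnsq : Complex.normSq ((p : ℂ) * Complex.exp (2 * Real.pi * Complex.I * θ) + (1 - p))
      = 1 - 4 * (p * (1 - p)) * s ^ 2 := by
    rw [harg]
    have h2 : Complex.normSq ((p : ℂ) * Complex.exp (((2 * (Real.pi * θ) : ℝ) : ℂ) * Complex.I) + (1 - p))
        = (p * Real.cos (2 * (Real.pi * θ)) + (1 - p))^2 + (p * Real.sin (2 * (Real.pi * θ)))^2 := by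
      simp [Complex.normSq_apply, Complex.exp_re, Complex.exp_im]
      ring
    rw [h2, Real.cos_two_mul, Real.sin_two_mul]
    linear_combination (4*p^2*c^2 + 4*p - 4*p^2) * hsc
  have hle : 1 - 4 * (p * (1 - p)) * s ^ 2 ≤ Real.exp (-(4 * (p * (1 - p)) * s ^ 2)) := by
    linarith [Real.add_one_le_exp (-(4 * (p * (1 - p)) * s ^ 2))]
  rw [Complex.norm_def, hnsq]
  calc Real.sqrt (1 - 4 * (p * (1 - p)) * s ^ 2)
      ≤ Real.sqrt (Real.exp (-(4 * (p * (1 - p)) * s ^ 2))) := Real.sqrt_le_sqrt hle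
    _ = Real.exp (-(2 * (p * (1 - p)) * s ^ 2)) := by
        rw [show (-(4 * (p * (1 - p)) * s ^ 2))
            = -(2 * (p * (1 - p)) * s ^ 2) + -(2 * (p * (1 - p)) * s ^ 2) by ring,
          Real.exp_add, Real.sqrt_mul_self (Real.exp_nonneg _)]

private lemma prod_eq {n : ℕ} (p : Fin n → ℝ) (z : ℂ) :
    ∏ j, ((p j : ℂ) * z + (1 - p j))
      = ∑ s : Finset (Fin n), ((pmWeight p s : ℝ) : ℂ) * z ^ s.card := by
  rw [Finset.prod_add, Finset.powerset_univ]
  refine Finset.sum_congr rfl fun s _ => ?_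
  rw [Finset.prod_mul_distrib, Finset.prod_const,
    show (Finset.univ \ s) = sᶜ from (Finset.compl_eq_univ_sdiff s).symm]
  unfold pmWeight
  push_cast
  ring

/-- For independent `±1`-valued random variables `z_1,…,z_n` with `Pr[z_j = 1] = p_j`
and `σ² = ∑_j p_j(1-p_j)`, for every integer `t`,
`Pr[∑_j z_j = t] ≤ ∫_0^1 exp(-2σ² sin²(πθ)) dθ`.
(The sum `∑_j z_j` equals `2|s| - n` where `s` is the set of `+1` coordinates.) -/
theorem prob_sum_eq_le_integral (n : ℕ) (p : Fin n → ℝ)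
    (hp : ∀ j, 0 ≤ p j ∧ p j ≤ 1) (t : ℤ) :
    ∑ s ∈ Finset.univ.filter
        (fun s : Finset (Fin n) => 2 * (s.card : ℤ) - (n : ℤ) = t), pmWeight p s
      ≤ ∫ θ in (0:ℝ)..1,
          Real.exp (-(2 * (∑ j, p j * (1 - p j)) * Real.sin (Real.pi * θ) ^ 2)) := by
  set σ2 := ∑ j, p j * (1 - p j) with hσ
  have hgcont : Continuous fun θ : ℝ => Real.exp (-(2 * σ2 * Real.sin (Real.pi * θ) ^ 2)) := by
    fun_prop
  by_cases hpar : ∃ k : ℤ, (n:ℤ) + t = 2 * k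
  swap
  · have hempty : Finset.univ.filter
        (fun s : Finset (Fin n) => 2 * (s.card : ℤ) - (n : ℤ) = t) = ∅ := by
      rw [Finset.filter_eq_empty_iff]
      intro s _ hcontr
      exact hpar ⟨(s.card : ℤ), by omega⟩
    rw [hempty, Finset.sum_empty]
    exact intervalIntegral.integral_nonneg zero_le_one (fun θ _ => (Real.exp_pos _).le)
  obtain ⟨k, hk⟩ := hpar
  set F : ℝ → ℂ := fun θ => Complex.exp (2 * Real.pi * Complex.I * (-k : ℤ) * θ) *
      ∏ j, ((p j : ℂ) * Complex.exp (2 * Real.pi * Complex.I * θ) + (1 - p j)) with hF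
  have hFcont : Continuous F := by fun_prop
  have hFeq : ∀ θ : ℝ, F θ = ∑ s : Finset (Fin n),
      ((pmWeight p s : ℝ) : ℂ) * Complex.exp (2 * Real.pi * Complex.I * ((((s.card : ℤ) - k) : ℤ) : ℂ) * θ) := by
    intro θ
    rw [hF]
    simp only
    rw [prod_eq, Finset.mul_sum]
    refine Finset.sum_congr rfl fun s _ => ?_
    rw [← Complex.exp_nat_mul, mul_left_comm, ← Complex.exp_add]
    congr 2
    push_cast
    ring
  have hIF : (∫ θ in (0:ℝ)..1, F θ)
      = ((∑ s ∈ Finset.univ.filter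
          (fun s : Finset (Fin n) => 2 * (s.card : ℤ) - (n : ℤ) = t), pmWeight p s : ℝ) : ℂ) := by
    rw [intervalIntegral.integral_congr (g := fun θ => ∑ s : Finset (Fin n),
        ((pmWeight p s : ℝ) : ℂ) * Complex.exp (2 * Real.pi * Complex.I * ((((s.card : ℤ) - k) : ℤ) : ℂ) * θ))
      (fun θ _ => hFeq θ)]
    rw [intervalIntegral.integral_finset_sum (fun s _ => (by fun_prop :
        Continuous fun θ : ℝ => ((pmWeight p s : ℝ) : ℂ) *
          Complex.exp (2 * Real.pi * Complex.I * ((((s.card : ℤ) - k) : ℤ) : ℂ) * θ)).intervalIntegrable _ _)]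
    have : ∀ s : Finset (Fin n),
        (∫ θ in (0:ℝ)..1, ((pmWeight p s : ℝ) : ℂ) *
          Complex.exp (2 * Real.pi * Complex.I * ((((s.card : ℤ) - k) : ℤ) : ℂ) * θ))
        = ((pmWeight p s : ℝ) : ℂ) * (if ((s.card : ℤ) - k) = 0 then 1 else 0) := by
      intro s
      rw [intervalIntegral.integral_const_mul, orth ((s.card : ℤ) - k)]
    simp_rw [this]
    rw [Finset.sum_filter]
    push_cast
    refine Finset.sum_congr rfl fun s _ => ?_
    by_cases hcase : 2 * (s.card : ℤ) - (n : ℤ) = t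
    · simp [hcase, show (s.card : ℤ) - k = 0 by omega]
    · simp [hcase, show ¬((s.card : ℤ) - k = 0) by omega]
  have hnormF : ∀ θ : ℝ, ‖F θ‖ ≤ Real.exp (-(2 * σ2 * Real.sin (Real.pi * θ) ^ 2)) := by
    intro θ
    rw [hF]
    simp only [norm_mul]
    have habs1 : ‖Complex.exp (2 * Real.pi * Complex.I * (-k : ℤ) * θ)‖ = 1 := by
      rw [Complex.norm_exp]
      norm_num
    rw [habs1, one_mul, norm_prod]
    calc ∏ j, ‖(p j : ℂ) * Complex.exp (2 * Real.pi * Complex.I * θ) + (1 - p j)‖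
        ≤ ∏ j, Real.exp (-(2 * (p j * (1 - p j)) * Real.sin (Real.pi * θ) ^ 2)) :=
          Finset.prod_le_prod (fun j _ => (norm_nonneg _))
            (fun j _ => norm_phi (p j) θ (hp j).1 (hp j).2)
      _ = Real.exp (-(2 * σ2 * Real.sin (Real.pi * θ) ^ 2)) := by
          rw [← Real.exp_sum]
          congr 1
          rw [Finset.sum_neg_distrib, hσ, Finset.mul_sum, Finset.sum_mul]
  calc ∑ s ∈ Finset.univ.filter
        (fun s : Finset (Fin n) => 2 * (s.card : ℤ) - (n : ℤ) = t), pmWeight p s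
      = (∫ θ in (0:ℝ)..1, F θ).re := by rw [hIF]; simp
    _ ≤ ‖∫ θ in (0:ℝ)..1, F θ‖ := Complex.re_le_norm _
    _ = ‖∫ θ in (0:ℝ)..1, F θ‖ := rfl
    _ ≤ ∫ θ in (0:ℝ)..1, ‖F θ‖ :=
        intervalIntegral.norm_integral_le_integral_norm zero_le_one
    _ ≤ ∫ θ in (0:ℝ)..1, Real.exp (-(2 * σ2 * Real.sin (Real.pi * θ) ^ 2)) := by
        refine intervalIntegral.integral_mono_on zero_le_one
          (hFcont.norm.intervalIntegrable _ _) (hgcont.intervalIntegrable _ _)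
          (fun θ _ => hnormF θ)
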